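/- Let (Z_t)_{t ≥ 0} be a real-valued stochastic process with square-integrable and covariance-stationary increments, i.e. Cov(Z_{t+h} − Z_{s+h}, Z_{v+h} − Z_{u+h}) = Cov(Z_t − Z_s, Z_v − Z_u) for all admissible s, t, u, v, h ≥ 0, and suppose there are constants b, κ ∈ ℝ and a function F : [0,∞) → ℝ such that Var(Z_t − Z_0) = (bt + 2F(t))·κ for all t ≥ 0. Then for every δ > 0 and k = 1, 2, ..., the autocovariance γ_k := Cov(Z_{(k+1)δ} − Z_{kδ}, Z_δ − Z_0) equals (F((k+1)δ) − 2F(kδ) + F((k−1)δ))·κ, and if (bδ + 2F(δ))·κ > 0 then the autocorrelation of increments equals (F((k+1)δ) − 2F(kδ) + F((k−1)δ)) / (bδ + 2F(δ)). -/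

import Mathlib

open MeasureTheory

section Aux

variable {Ω : Type*} [MeasurableSpace Ω] {ℙ : Measure Ω} [IsProbabilityMeasure ℙ]

/-- Product of two L² functions is integrable (polarization trick). -/
lemma aux_integrable_mul {f g : Ω → ℝ} (hf : MemLp f 2 ℙ) (hg : MemLp g 2 ℙ) :
    Integrable (fun ω => f ω * g ω) ℙ := by
  have h1 := (hf.add hg).integrable_sq
  have h2 := hf.integrable_sq
  have h3 := hg.integrable_sq
  have heq : (fun ω => f ω * g ω)
      = fun ω => (((f + g) ω) ^ 2 - f ω ^ 2 - g ω ^ 2) / 2 := by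
    funext ω; simp only [Pi.add_apply]; ring
  rw [heq]
  exact ((h1.sub h2).sub h3).div_const 2

/-- The covariance integral. -/
noncomputable def covI (ℙ : Measure Ω) (X Y : Ω → ℝ) : ℝ :=
  ∫ ω, (X ω - ∫ ω', X ω' ∂ℙ) * (Y ω - ∫ ω', Y ω' ∂ℙ) ∂ℙ

lemma covI_comm (X Y : Ω → ℝ) : covI ℙ X Y = covI ℙ Y X := by
  unfold covI
  exact integral_congr_ae (Filter.Eventually.of_forall fun ω => mul_comm _ _)

lemma covI_sub_left {f g h : Ω → ℝ} (hf : MemLp f 2 ℙ) (hg : MemLp g 2 ℙ)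
    (hh : MemLp h 2 ℙ) :
    covI ℙ (f - g) h = covI ℙ f h - covI ℙ g h := by
  have hfi : Integrable f ℙ := hf.integrable one_le_two
  have hgi : Integrable g ℙ := hg.integrable one_le_two
  have hfc : MemLp (fun ω => f ω - ∫ ω', f ω' ∂ℙ) 2 ℙ := hf.sub (memLp_const _)
  have hgc : MemLp (fun ω => g ω - ∫ ω', g ω' ∂ℙ) 2 ℙ := hg.sub (memLp_const _)
  have hhc : MemLp (fun ω => h ω - ∫ ω', h ω' ∂ℙ) 2 ℙ := hh.sub (memLp_const _)
  have i1 : Integrable (fun ω => (f ω - ∫ ω', f ω' ∂ℙ) * (h ω - ∫ ω', h ω' ∂ℙ)) ℙ :=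
    aux_integrable_mul hfc hhc
  have i2 : Integrable (fun ω => (g ω - ∫ ω', g ω' ∂ℙ) * (h ω - ∫ ω', h ω' ∂ℙ)) ℙ :=
    aux_integrable_mul hgc hhc
  unfold covI
  have key : ∀ ω, ((f - g) ω - ∫ ω', (f - g) ω' ∂ℙ) * (h ω - ∫ ω', h ω' ∂ℙ)
      = (f ω - ∫ ω', f ω' ∂ℙ) * (h ω - ∫ ω', h ω' ∂ℙ)
        - (g ω - ∫ ω', g ω' ∂ℙ) * (h ω - ∫ ω', h ω' ∂ℙ) := by
    intro ω
    have : ∫ ω', (f - g) ω' ∂ℙ = (∫ ω', f ω' ∂ℙ) - ∫ ω', g ω' ∂ℙ :=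
      integral_sub hfi hgi
    rw [this]; simp only [Pi.sub_apply]; ring
  calc ∫ ω, ((f - g) ω - ∫ ω', (f - g) ω' ∂ℙ) * (h ω - ∫ ω', h ω' ∂ℙ) ∂ℙ
      = ∫ ω, ((f ω - ∫ ω', f ω' ∂ℙ) * (h ω - ∫ ω', h ω' ∂ℙ)
          - (g ω - ∫ ω', g ω' ∂ℙ) * (h ω - ∫ ω', h ω' ∂ℙ)) ∂ℙ :=
        integral_congr_ae (Filter.Eventually.of_forall key)
    _ = _ := integral_sub i1 i2

lemma covI_sub_right {f g h : Ω → ℝ} (hf : MemLp f 2 ℙ) (hg : MemLp g 2 ℙ)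
    (hh : MemLp h 2 ℙ) :
    covI ℙ f (g - h) = covI ℙ f g - covI ℙ f h := by
  rw [covI_comm, covI_sub_left hg hh hf, covI_comm g f, covI_comm h f]

end Aux

/-- If `(Z_t)_{t ≥ 0}` has square-integrable, covariance-stationary
increments and `Var(Z_t − Z_0) = (bt + 2F(t))·κ` for all `t ≥ 0`, then for every `δ > 0`
and `k = 1, 2, ...`, the autocovariance `γ_k = Cov(Z_{(k+1)δ} − Z_{kδ}, Z_δ − Z_0)` equals
`(F((k+1)δ) − 2F(kδ) + F((k−1)δ))·κ`, and if `(bδ + 2F(δ))·κ > 0` then the autocorrelation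
equals `(F((k+1)δ) − 2F(kδ) + F((k−1)δ)) / (bδ + 2F(δ))`. -/
theorem autocovariance_of_price_changes
    {Ω : Type*} [MeasurableSpace Ω] (ℙ : Measure Ω) [IsProbabilityMeasure ℙ]
    (Z : ℝ → Ω → ℝ)
    (hL2 : ∀ s t : ℝ, 0 ≤ s → 0 ≤ t → MeasureTheory.MemLp (Z t - Z s) 2 ℙ)
    (Cov : (Ω → ℝ) → (Ω → ℝ) → ℝ)
    (hCov : ∀ X Y : Ω → ℝ,
      Cov X Y = ∫ ω, (X ω - ∫ ω', X ω' ∂ℙ) * (Y ω - ∫ ω', Y ω' ∂ℙ) ∂ℙ)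
    (hstat : ∀ s t u v h : ℝ, 0 ≤ s → 0 ≤ t → 0 ≤ u → 0 ≤ v → 0 ≤ h →
      Cov (Z (t+h) - Z (s+h)) (Z (v+h) - Z (u+h)) = Cov (Z t - Z s) (Z v - Z u))
    (b κ : ℝ) (F : ℝ → ℝ)
    (hVar : ∀ t ≥ (0:ℝ), Cov (Z t - Z 0) (Z t - Z 0) = (b * t + 2 * F t) * κ) :
    ∀ δ > (0:ℝ), ∀ k : ℕ, 1 ≤ k →
      Cov (Z (((k:ℝ)+1)*δ) - Z ((k:ℝ)*δ)) (Z δ - Z 0) =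
        (F (((k:ℝ)+1)*δ) - 2 * F ((k:ℝ)*δ) + F (((k:ℝ)-1)*δ)) * κ ∧
      ((b * δ + 2 * F δ) * κ > 0 →
        Cov (Z (((k:ℝ)+1)*δ) - Z ((k:ℝ)*δ)) (Z δ - Z 0) / ((b * δ + 2 * F δ) * κ) =
          (F (((k:ℝ)+1)*δ) - 2 * F ((k:ℝ)*δ) + F (((k:ℝ)-1)*δ)) / (b * δ + 2 * F δ)) := by
  -- Cov agrees with the covariance integral
  have hC : ∀ X Y : Ω → ℝ, Cov X Y = covI ℙ X Y := fun X Y => hCov X Y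
  set V : ℝ → ℝ := fun t => (b * t + 2 * F t) * κ with hV
  -- Covariance of two increments from 0, for 0 ≤ s ≤ t
  have Cst : ∀ s t : ℝ, 0 ≤ s → s ≤ t →
      covI ℙ (Z s - Z 0) (Z t - Z 0) = (V s + V t - V (t - s)) / 2 := by
    intro s t hs hst
    have ht : (0:ℝ) ≤ t := le_trans hs hst
    have hts : (0:ℝ) ≤ t - s := by linarith
    have hA : MemLp (Z t - Z 0) 2 ℙ := hL2 0 t le_rfl ht
    have hB : MemLp (Z s - Z 0) 2 ℙ := hL2 0 s le_rfl hs
    -- stationarity: Var (Z t - Z s) = V (t - s)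
    have hvar_ts : Cov (Z t - Z s) (Z t - Z s) = V (t - s) := by
      have := hstat 0 (t - s) 0 (t - s) s le_rfl hts le_rfl hts hs
      rw [sub_add_cancel, zero_add] at this
      rw [this]
      exact hVar (t - s) hts
    -- decompose Z t - Z s = (Z t - Z 0) - (Z s - Z 0)
    have hdec : Z t - Z s = (Z t - Z 0) - (Z s - Z 0) := by
      funext ω; simp [Pi.sub_apply]
    have hvarI : covI ℙ ((Z t - Z 0) - (Z s - Z 0)) ((Z t - Z 0) - (Z s - Z 0))
        = V (t - s) := by
      rw [← hdec, ← hC]; exact hvar_ts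
    rw [covI_sub_left hA hB (hA.sub hB), covI_sub_right hA hA hB,
      covI_sub_right hB hA hB] at hvarI
    have hVt : covI ℙ (Z t - Z 0) (Z t - Z 0) = V t := by
      rw [← hC]; exact hVar t ht
    have hVs : covI ℙ (Z s - Z 0) (Z s - Z 0) = V s := by
      rw [← hC]; exact hVar s hs
    have hsym : covI ℙ (Z t - Z 0) (Z s - Z 0) = covI ℙ (Z s - Z 0) (Z t - Z 0) :=
      covI_comm _ _
    rw [hVt, hVs, hsym] at hvarI
    linarith
  intro δ hδ k hk
  have hδ0 : (0:ℝ) ≤ δ := le_of_lt hδ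
  have hk1 : (1:ℝ) ≤ (k:ℝ) := by exact_mod_cast hk
  have h1 : (0:ℝ) ≤ (k:ℝ) * δ := mul_nonneg (by linarith) hδ0
  have h2 : (0:ℝ) ≤ ((k:ℝ) + 1) * δ := mul_nonneg (by linarith) hδ0
  have hA : MemLp (Z (((k:ℝ)+1)*δ) - Z 0) 2 ℙ := hL2 0 _ le_rfl h2
  have hB : MemLp (Z ((k:ℝ)*δ) - Z 0) 2 ℙ := hL2 0 _ le_rfl h1
  have hD : MemLp (Z δ - Z 0) 2 ℙ := hL2 0 _ le_rfl hδ0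
  have hdec : Z (((k:ℝ)+1)*δ) - Z ((k:ℝ)*δ)
      = (Z (((k:ℝ)+1)*δ) - Z 0) - (Z ((k:ℝ)*δ) - Z 0) := by
    funext ω; simp [Pi.sub_apply]
  have hδk : δ ≤ (k:ℝ) * δ := by nlinarith
  have hδk1 : δ ≤ ((k:ℝ) + 1) * δ := by nlinarith
  have e1 : covI ℙ (Z (((k:ℝ)+1)*δ) - Z 0) (Z δ - Z 0)
      = (V δ + V (((k:ℝ)+1)*δ) - V (((k:ℝ)+1)*δ - δ)) / 2 := by
    rw [covI_comm]; exact Cst δ _ hδ0 hδk1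
  have e2 : covI ℙ (Z ((k:ℝ)*δ) - Z 0) (Z δ - Z 0)
      = (V δ + V ((k:ℝ)*δ) - V ((k:ℝ)*δ - δ)) / 2 := by
    rw [covI_comm]; exact Cst δ _ hδ0 hδk
  have hs1 : ((k:ℝ)+1)*δ - δ = (k:ℝ)*δ := by ring
  have hs2 : (k:ℝ)*δ - δ = ((k:ℝ)-1)*δ := by ring
  have hmain : Cov (Z (((k:ℝ)+1)*δ) - Z ((k:ℝ)*δ)) (Z δ - Z 0) =
      (F (((k:ℝ)+1)*δ) - 2 * F ((k:ℝ)*δ) + F (((k:ℝ)-1)*δ)) * κ := by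
    rw [hC, hdec, covI_sub_left hA hB hD, e1, e2, hs1, hs2]
    simp only [hV]
    ring
  refine ⟨hmain, fun hpos => ?_⟩
  have hκ : κ ≠ 0 := by
    intro h0; rw [h0, mul_zero] at hpos; exact lt_irrefl 0 hpos
  rw [hmain, mul_div_mul_right _ _ hκ]
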